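/- Let ε > 0, p > 0, let Ω ⊂ ℝ² be a bounded measurable set, let w : ℝ² → ℝ be a nonnegative bounded measurable even function, and let u, v : Ω → ℝ be bounded measurable functions. Define g : ℝ → ℝ by g(s) = J_{ε,p}(u + s·v) = (1/4)∫_Ω ∫_Ω w(x−y) φ_{ε,p}((u+s·v)(y) − (u+s·v)(x)) dx dy. Then g is differentiable at s = 0 with g′(0) = −∫_Ω K_{ε,p}(u)(x) v(x) dx. -/

import Mathlib

open Real MeasureTheory

/-- The differential kernel `k_{ε,p}(s) = s (s² + ε²)^((p−2)/2)`. -/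
noncomputable def kKer (ε p s : ℝ) : ℝ := s * (s ^ 2 + ε ^ 2) ^ ((p - 2) / 2)

/-- `v` is bounded and measurable (bounded on `Ω`). -/
def BddMeas (Ω : Set (ℝ × ℝ)) (v : ℝ × ℝ → ℝ) : Prop :=
  Measurable v ∧ ∃ M, ∀ x ∈ Ω, |v x| ≤ M

/-- The nonlocal diffusion operator `K_{ε,p}(v)(x) = ∫_Ω w(x−y) k_{ε,p}(v(y)−v(x)) dy`. -/
noncomputable def Knl (ε p : ℝ) (w : ℝ × ℝ → ℝ) (Ω : Set (ℝ × ℝ)) (v : ℝ × ℝ → ℝ)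
    (x : ℝ × ℝ) : ℝ :=
  ∫ y in Ω, w (x - y) * kKer ε p (v y - v x)

/-- The regularized potential `φ_{ε,p}(s) = (2/p)(s² + ε²)^(p/2) − (2/p)ε^p`. -/
noncomputable def phiReg (ε p s : ℝ) : ℝ := (2 / p) * (s ^ 2 + ε ^ 2) ^ (p / 2) - (2 / p) * ε ^ p

/-- The regularized nonlocal energy `J_{ε,p}(v) = (1/4)∫_Ω∫_Ω w(x−y) φ_{ε,p}(v(y)−v(x))`. -/
noncomputable def Jnl (ε p : ℝ) (w : ℝ × ℝ → ℝ) (Ω : Set (ℝ × ℝ)) (v : ℝ × ℝ → ℝ) : ℝ :=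
  (1/4) * ∫ x in Ω, ∫ y in Ω, w (x - y) * phiReg ε p (v y - v x)


lemma continuous_kKer (ε p : ℝ) (hε : 0 < ε) : Continuous (kKer ε p) := by
  unfold kKer
  exact continuous_id.mul ((continuous_pow 2 |>.add continuous_const).rpow_const
    (fun s => Or.inl (by show s ^ 2 + ε ^ 2 ≠ 0; positivity)))

lemma continuous_phiReg (ε p : ℝ) (hε : 0 < ε) : Continuous (phiReg ε p) := by
  unfold phiReg
  exact (continuous_const.mul ((continuous_pow 2 |>.add continuous_const).rpow_const
    (fun s => Or.inl (by show s ^ 2 + ε ^ 2 ≠ 0; positivity)))).sub continuous_const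

lemma kKer_neg (ε p s : ℝ) : kKer ε p (-s) = - kKer ε p s := by
  unfold kKer; rw [neg_pow]; ring_nf

lemma hasDerivAt_phiReg (ε p : ℝ) (hε : 0 < ε) (hp : 0 < p) (s : ℝ) :
    HasDerivAt (phiReg ε p) (2 * kKer ε p s) s := by
  have hq : (0:ℝ) < s ^ 2 + ε ^ 2 := by positivity
  have h1 : HasDerivAt (fun t : ℝ => t ^ 2 + ε ^ 2) (2 * s) s := by
    simpa using (hasDerivAt_pow 2 s).add_const (ε ^ 2)
  have h2 : HasDerivAt (fun x : ℝ => x ^ (p / 2))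
      ((p / 2) * (s ^ 2 + ε ^ 2) ^ (p / 2 - 1)) (s ^ 2 + ε ^ 2) :=
    Real.hasDerivAt_rpow_const (Or.inl (ne_of_gt hq))
  have h3 := (h2.comp s h1).const_mul (2 / p)
  have h4 := h3.sub_const ((2 / p) * ε ^ p)
  refine h4.congr_deriv ?_
  have he : p / 2 - 1 = (p - 2) / 2 := by ring
  rw [he]
  unfold kKer
  field_simp

lemma kKer_bound (ε p : ℝ) (hε : 0 < ε) {R t : ℝ} (hR : 0 ≤ R) (ht : |t| ≤ R) :
    |kKer ε p t| ≤ R * ((R ^ 2 + ε ^ 2) ^ ((p - 2) / 2) + (ε ^ 2) ^ ((p - 2) / 2)) := by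
  have hq : (0:ℝ) < t ^ 2 + ε ^ 2 := by positivity
  have ht2 : t ^ 2 ≤ R ^ 2 := by
    have := sq_abs t ▸ pow_le_pow_left₀ (abs_nonneg t) ht 2
    simpa [sq_abs] using this
  have hbase : (t ^ 2 + ε ^ 2) ^ ((p - 2) / 2)
      ≤ (R ^ 2 + ε ^ 2) ^ ((p - 2) / 2) + (ε ^ 2) ^ ((p - 2) / 2) := by
    rcases le_or_gt 0 ((p - 2) / 2) with hc | hc
    · have h1 : (t ^ 2 + ε ^ 2) ^ ((p - 2) / 2) ≤ (R ^ 2 + ε ^ 2) ^ ((p - 2) / 2) :=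
        Real.rpow_le_rpow (le_of_lt hq) (by linarith) hc
      have h2 : (0:ℝ) ≤ (ε ^ 2) ^ ((p - 2) / 2) := Real.rpow_nonneg (by positivity) _
      linarith
    · have h1 : (t ^ 2 + ε ^ 2) ^ ((p - 2) / 2) ≤ (ε ^ 2) ^ ((p - 2) / 2) :=
        Real.rpow_le_rpow_of_nonpos (by positivity) (by nlinarith) (le_of_lt hc)
      have h2 : (0:ℝ) ≤ (R ^ 2 + ε ^ 2) ^ ((p - 2) / 2) := Real.rpow_nonneg (by positivity) _
      linarith
  calc |kKer ε p t| = |t| * (t ^ 2 + ε ^ 2) ^ ((p - 2) / 2) := by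
        unfold kKer
        rw [abs_mul, abs_of_pos (Real.rpow_pos_of_pos hq _)]
    _ ≤ R * ((R ^ 2 + ε ^ 2) ^ ((p - 2) / 2) + (ε ^ 2) ^ ((p - 2) / 2)) :=
        mul_le_mul ht hbase (Real.rpow_nonneg (le_of_lt hq) _) hR

lemma phiReg_bound (ε p : ℝ) (hε : 0 < ε) (hp : 0 < p) {R t : ℝ} (hR : 0 ≤ R) (ht : |t| ≤ R) :
    |phiReg ε p t| ≤ (2 / p) * (R ^ 2 + ε ^ 2) ^ (p / 2) + (2 / p) * ε ^ p := by
  have hq : (0:ℝ) < t ^ 2 + ε ^ 2 := by positivity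
  have ht2 : t ^ 2 ≤ R ^ 2 := by nlinarith [sq_abs t, abs_nonneg t]
  have h1 : (t ^ 2 + ε ^ 2) ^ (p / 2) ≤ (R ^ 2 + ε ^ 2) ^ (p / 2) :=
    Real.rpow_le_rpow (le_of_lt hq) (by linarith) (by positivity)
  have h2 : (0:ℝ) ≤ (t ^ 2 + ε ^ 2) ^ (p / 2) := Real.rpow_nonneg (le_of_lt hq) _
  have h3 : (0:ℝ) ≤ ε ^ p := Real.rpow_nonneg hε.le _
  unfold phiReg
  refine (abs_sub _ _).trans ?_
  rw [abs_of_nonneg (by positivity), abs_of_nonneg (by positivity)]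
  have := mul_le_mul_of_nonneg_left h1 (by positivity : (0:ℝ) ≤ 2 / p)
  linarith

theorem gateaux_derivative_Jnl (ε p : ℝ) (hε : 0 < ε) (hp : 0 < p)
    (Ω : Set (ℝ × ℝ)) (hΩm : MeasurableSet Ω) (hΩb : Bornology.IsBounded Ω)
    (w : ℝ × ℝ → ℝ) (hwm : Measurable w) (hwnn : ∀ z, 0 ≤ w z)
    (hwbd : ∃ M, ∀ z, |w z| ≤ M) (hwe : ∀ z, w (-z) = w z)
    (u v : ℝ × ℝ → ℝ) (hu : BddMeas Ω u) (hv : BddMeas Ω v) :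
    HasDerivAt (fun s : ℝ => Jnl ε p w Ω (fun x => u x + s * v x))
      (-∫ x in Ω, Knl ε p w Ω u x * v x) 0 := by
  obtain ⟨hum, Mu0, hMu0⟩ := hu
  obtain ⟨hvm, Mv0, hMv0⟩ := hv
  obtain ⟨Mw, hMw⟩ := hwbd
  set Mu := max Mu0 0 with hMu_def
  set Mv := max Mv0 0 with hMv_def
  have hMu : ∀ x ∈ Ω, |u x| ≤ Mu := fun x hx => (hMu0 x hx).trans (le_max_left _ _)
  have hMv : ∀ x ∈ Ω, |v x| ≤ Mv := fun x hx => (hMv0 x hx).trans (le_max_left _ _)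
  have hMun : (0:ℝ) ≤ Mu := le_max_right _ _
  have hMvn : (0:ℝ) ≤ Mv := le_max_right _ _
  have hMwn : (0:ℝ) ≤ Mw := (abs_nonneg _).trans (hMw 0)
  set μ : Measure ((ℝ×ℝ)×(ℝ×ℝ)) := (volume.restrict Ω).prod (volume.restrict Ω) with hμ
  haveI : IsFiniteMeasure (volume.restrict Ω) :=
    ⟨by simpa [Measure.restrict_apply_univ] using hΩb.measure_lt_top⟩
  haveI : IsFiniteMeasure μ := by rw [hμ]; infer_instance
  -- generic integrability
  have key_int : ∀ {f : (ℝ×ℝ)×(ℝ×ℝ) → ℝ}, Measurable f → ∀ (C : ℝ),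
      (∀ z : (ℝ×ℝ)×(ℝ×ℝ), z.1 ∈ Ω → z.2 ∈ Ω → |f z| ≤ C) → Integrable f μ := by
    intro f hf C hC
    refine Integrable.mono' (integrable_const C) hf.aestronglyMeasurable ?_
    rw [hμ, Measure.prod_restrict]
    filter_upwards [ae_restrict_mem (hΩm.prod hΩm)] with z hz
    exact (Real.norm_eq_abs _) ▸ hC z hz.1 hz.2
  set F : ℝ → (ℝ×ℝ)×(ℝ×ℝ) → ℝ := fun s z =>
    w (z.1 - z.2) * phiReg ε p ((u z.2 + s * v z.2) - (u z.1 + s * v z.1)) with hF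
  set F' : ℝ → (ℝ×ℝ)×(ℝ×ℝ) → ℝ := fun s z =>
    w (z.1 - z.2) * (2 * kKer ε p ((u z.2 + s * v z.2) - (u z.1 + s * v z.1)) *
      (v z.2 - v z.1)) with hF'
  have hmw : Measurable fun z : (ℝ×ℝ)×(ℝ×ℝ) => w (z.1 - z.2) :=
    hwm.comp (measurable_fst.sub measurable_snd)
  have harg : ∀ s : ℝ, Measurable fun z : (ℝ×ℝ)×(ℝ×ℝ) =>
      (u z.2 + s * v z.2) - (u z.1 + s * v z.1) := fun s =>
    ((hum.comp measurable_snd).add (measurable_const.mul (hvm.comp measurable_snd))).sub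
      ((hum.comp measurable_fst).add (measurable_const.mul (hvm.comp measurable_fst)))
  have hFmeas : ∀ s, Measurable (F s) := fun s =>
    hmw.mul (((continuous_phiReg ε p hε).measurable).comp (harg s))
  have hF'meas : ∀ s, Measurable (F' s) := fun s =>
    hmw.mul ((measurable_const.mul ((continuous_kKer ε p hε).measurable.comp (harg s))).mul
      ((hvm.comp measurable_snd).sub (hvm.comp measurable_fst)))
  -- pointwise derivative
  have hdiff : ∀ (z : (ℝ×ℝ)×(ℝ×ℝ)) (s : ℝ), HasDerivAt (fun s => F s z) (F' s z) s := by
    intro z s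
    have h1 : HasDerivAt (fun s : ℝ => (u z.2 + s * v z.2) - (u z.1 + s * v z.1))
        (v z.2 - v z.1) s := by
      exact ((((hasDerivAt_id s).mul_const (v z.2)).const_add (u z.2)).sub
        (((hasDerivAt_id s).mul_const (v z.1)).const_add (u z.1))).congr_deriv (by ring)
    have h2 := ((hasDerivAt_phiReg ε p hε hp _).comp s h1).const_mul (w (z.1 - z.2))
    simpa [hF, hF', mul_assoc] using h2
  -- argument bound
  have hargbd : ∀ (s : ℝ) (z : (ℝ×ℝ)×(ℝ×ℝ)), z.1 ∈ Ω → z.2 ∈ Ω →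
      |(u z.2 + s * v z.2) - (u z.1 + s * v z.1)| ≤ 2 * Mu + |s| * (2 * Mv) := by
    intro s z h1 h2
    have e1 := hMu _ h1; have e2 := hMu _ h2
    have e3 : |s * v z.1| ≤ |s| * Mv := by
      rw [abs_mul]; exact mul_le_mul_of_nonneg_left (hMv _ h1) (abs_nonneg s)
    have e4 : |s * v z.2| ≤ |s| * Mv := by
      rw [abs_mul]; exact mul_le_mul_of_nonneg_left (hMv _ h2) (abs_nonneg s)
    calc |(u z.2 + s * v z.2) - (u z.1 + s * v z.1)|
        ≤ |u z.2 + s * v z.2| + |u z.1 + s * v z.1| := abs_sub _ _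
      _ ≤ (|u z.2| + |s * v z.2|) + (|u z.1| + |s * v z.1|) :=
          add_le_add (abs_add_le _ _) (abs_add_le _ _)
      _ ≤ 2 * Mu + |s| * (2 * Mv) := by linarith
  set CK : ℝ := (2*Mu + 2*Mv) * (((2*Mu + 2*Mv) ^ 2 + ε ^ 2) ^ ((p - 2) / 2)
    + (ε ^ 2) ^ ((p - 2) / 2)) with hCK
  set Cb : ℝ := Mw * (2 * CK * (2 * Mv)) with hCb
  have hbound : ∀ᵐ z ∂μ, ∀ s ∈ Metric.ball (0:ℝ) 1, ‖F' s z‖ ≤ Cb := by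
    rw [hμ, Measure.prod_restrict]
    filter_upwards [ae_restrict_mem (hΩm.prod hΩm)] with z hz s hs
    have hs1 : |s| ≤ 1 := by
      have := mem_ball_iff_norm.mp hs
      simpa using this.le
    have habd : |(u z.2 + s * v z.2) - (u z.1 + s * v z.1)| ≤ 2 * Mu + 2 * Mv := by
      have := hargbd s z hz.1 hz.2
      nlinarith [abs_nonneg s]
    have hk := kKer_bound ε p hε (R := 2*Mu + 2*Mv) (by linarith) habd
    have hCKn : (0:ℝ) ≤ CK := (abs_nonneg _).trans (hCK ▸ hk)
    have hv12 : |v z.2 - v z.1| ≤ 2 * Mv := by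
      have := abs_sub (v z.2) (v z.1)
      have := hMv _ hz.1; have := hMv _ hz.2
      linarith [abs_sub (v z.2) (v z.1)]
    rw [Real.norm_eq_abs]
    simp only [hF']
    rw [abs_mul, abs_mul, abs_mul, abs_two]
    rw [hCb]
    refine mul_le_mul (hMw _) ?_ (by positivity) hMwn
    refine mul_le_mul ?_ hv12 (abs_nonneg _) (by linarith)
    exact mul_le_mul_of_nonneg_left (hCK ▸ hk) (by norm_num)
  -- integrability of F s
  have hFint : ∀ s : ℝ, Integrable (F s) μ := by
    intro s
    refine key_int (hFmeas s) (Mw * ((2 / p) * ((2*Mu + |s| * (2*Mv)) ^ 2 + ε ^ 2) ^ (p / 2)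
      + (2 / p) * ε ^ p)) ?_
    intro z h1 h2
    have hφ := phiReg_bound ε p hε hp (R := 2*Mu + |s| * (2*Mv))
      (by positivity) (hargbd s z h1 h2)
    simp only [hF]
    rw [abs_mul]
    refine mul_le_mul (hMw _) hφ (abs_nonneg _) hMwn
  -- differentiation under the integral sign
  have H := hasDerivAt_integral_of_dominated_loc_of_deriv_le (μ := μ) (F := F) (F' := F')
    (x₀ := (0:ℝ)) (bound := fun _ => Cb) (Metric.ball_mem_nhds 0 zero_lt_one)
    (Filter.Eventually.of_forall fun s => (hFmeas s).aestronglyMeasurable)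
    (hFint 0) ((hF'meas 0).aestronglyMeasurable) hbound (integrable_const _)
    (Filter.Eventually.of_forall fun z => fun s _ => hdiff z s)
  have H2 := H.2.const_mul (1/4 : ℝ)
  have hfun : (fun s : ℝ => Jnl ε p w Ω (fun x => u x + s * v x))
      = fun s : ℝ => 1/4 * ∫ z, F s z ∂μ := by
    funext s
    unfold Jnl
    congr 1
    rw [hμ]
    exact integral_integral (f := fun x y : ℝ×ℝ =>
      w (x - y) * phiReg ε p ((u y + s * v y) - (u x + s * v x))) (by rw [← hμ]; exact hFint s)
  have hGmeas : Measurable fun z : (ℝ×ℝ)×(ℝ×ℝ) =>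
      w (z.1 - z.2) * kKer ε p (u z.2 - u z.1) := by
    exact hmw.mul ((continuous_kKer ε p hε).measurable.comp
      ((hum.comp measurable_snd).sub (hum.comp measurable_fst)))
  have hubd : ∀ z : (ℝ×ℝ)×(ℝ×ℝ), z.1 ∈ Ω → z.2 ∈ Ω → |u z.2 - u z.1| ≤ 2 * Mu := by
    intro z h1 h2
    have := hMu _ h1; have := hMu _ h2
    linarith [abs_sub (u z.2) (u z.1)]
  have hCK0 : ∀ z : (ℝ×ℝ)×(ℝ×ℝ), z.1 ∈ Ω → z.2 ∈ Ω →
      |kKer ε p (u z.2 - u z.1)| ≤ (2*Mu) * (((2*Mu) ^ 2 + ε ^ 2) ^ ((p - 2) / 2)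
        + (ε ^ 2) ^ ((p - 2) / 2)) := fun z h1 h2 =>
    kKer_bound ε p hε (by linarith) (hubd z h1 h2)
  set CK0 : ℝ := (2*Mu) * (((2*Mu) ^ 2 + ε ^ 2) ^ ((p - 2) / 2)
    + (ε ^ 2) ^ ((p - 2) / 2)) with hCK0d
  have hGbd : ∀ (g : ((ℝ×ℝ)×(ℝ×ℝ)) → ℝ), (∀ z, z.1 ∈ Ω → z.2 ∈ Ω → |g z| ≤ Mv) →
      ∀ z : (ℝ×ℝ)×(ℝ×ℝ), z.1 ∈ Ω → z.2 ∈ Ω →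
      |w (z.1 - z.2) * kKer ε p (u z.2 - u z.1) * g z| ≤ Mw * CK0 * Mv := by
    intro g hg z h1 h2
    rw [abs_mul, abs_mul]
    refine mul_le_mul ?_ (hg z h1 h2) (abs_nonneg _) (by positivity)
    exact mul_le_mul (hMw _) (hCK0 z h1 h2) (abs_nonneg _) hMwn
  have hI1 : Integrable (fun z : (ℝ×ℝ)×(ℝ×ℝ) =>
      w (z.1 - z.2) * kKer ε p (u z.2 - u z.1) * v z.1) μ :=
    key_int (hGmeas.mul (hvm.comp measurable_fst)) (Mw * CK0 * Mv)
      (hGbd (fun z => v z.1) (fun z h1 _ => hMv _ h1))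
  have hI2 : Integrable (fun z : (ℝ×ℝ)×(ℝ×ℝ) =>
      w (z.1 - z.2) * kKer ε p (u z.2 - u z.1) * v z.2) μ :=
    key_int (hGmeas.mul (hvm.comp measurable_snd)) (Mw * CK0 * Mv)
      (hGbd (fun z => v z.2) (fun z _ h2 => hMv _ h2))
  -- the value of the derivative integral
  have hstepA : ∫ z, F' 0 z ∂μ
      = ∫ z : (ℝ×ℝ)×(ℝ×ℝ), (2 * (w (z.1 - z.2) * kKer ε p (u z.2 - u z.1) * v z.2)
        - 2 * (w (z.1 - z.2) * kKer ε p (u z.2 - u z.1) * v z.1)) ∂μ := by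
    congr 1
    funext z
    simp only [hF', zero_mul, add_zero]
    ring
  have hstepB : ∫ z, F' 0 z ∂μ
      = 2 * (∫ z : (ℝ×ℝ)×(ℝ×ℝ), w (z.1 - z.2) * kKer ε p (u z.2 - u z.1) * v z.2 ∂μ)
      - 2 * (∫ z : (ℝ×ℝ)×(ℝ×ℝ), w (z.1 - z.2) * kKer ε p (u z.2 - u z.1) * v z.1 ∂μ) := by
    rw [hstepA, integral_sub (hI2.const_mul 2) (hI1.const_mul 2),
      integral_const_mul, integral_const_mul]
  have hswap : (∫ z : (ℝ×ℝ)×(ℝ×ℝ), w (z.1 - z.2) * kKer ε p (u z.2 - u z.1) * v z.2 ∂μ)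
      = - ∫ z : (ℝ×ℝ)×(ℝ×ℝ), w (z.1 - z.2) * kKer ε p (u z.2 - u z.1) * v z.1 ∂μ := by
    have h1 : ∀ z : (ℝ×ℝ)×(ℝ×ℝ), w (z.1 - z.2) * kKer ε p (u z.2 - u z.1) * v z.2
        = -((fun z : (ℝ×ℝ)×(ℝ×ℝ) => w (z.1 - z.2) * kKer ε p (u z.2 - u z.1) * v z.1)
            z.swap) := by
      intro z
      simp only [Prod.fst_swap, Prod.snd_swap]
      have hw : w (z.2 - z.1) = w (z.1 - z.2) := by rw [← neg_sub z.1 z.2, hwe]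
      rw [hw, show u z.1 - u z.2 = -(u z.2 - u z.1) by ring, kKer_neg]
      ring
    calc (∫ z : (ℝ×ℝ)×(ℝ×ℝ), w (z.1 - z.2) * kKer ε p (u z.2 - u z.1) * v z.2 ∂μ)
        = ∫ z : (ℝ×ℝ)×(ℝ×ℝ), -((fun z : (ℝ×ℝ)×(ℝ×ℝ) =>
            w (z.1 - z.2) * kKer ε p (u z.2 - u z.1) * v z.1) z.swap) ∂μ := by
          exact integral_congr_ae (Filter.Eventually.of_forall h1)
      _ = - ∫ z : (ℝ×ℝ)×(ℝ×ℝ), (fun z : (ℝ×ℝ)×(ℝ×ℝ) =>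
            w (z.1 - z.2) * kKer ε p (u z.2 - u z.1) * v z.1) z.swap ∂μ := integral_neg _
      _ = - ∫ z : (ℝ×ℝ)×(ℝ×ℝ), w (z.1 - z.2) * kKer ε p (u z.2 - u z.1) * v z.1 ∂μ := by
          rw [hμ]
          exact congrArg Neg.neg (integral_prod_swap
            (fun z : (ℝ×ℝ)×(ℝ×ℝ) => w (z.1 - z.2) * kKer ε p (u z.2 - u z.1) * v z.1))
  have hD : (∫ z : (ℝ×ℝ)×(ℝ×ℝ), w (z.1 - z.2) * kKer ε p (u z.2 - u z.1) * v z.1 ∂μ)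
      = ∫ x in Ω, Knl ε p w Ω u x * v x := by
    rw [hμ, ← integral_integral (f := fun x y : ℝ×ℝ =>
      w (x - y) * kKer ε p (u y - u x) * v x) (by rw [← hμ]; exact hI1)]
    have hinner : ∀ x : ℝ×ℝ, (∫ y in Ω, w (x - y) * kKer ε p (u y - u x) * v x)
        = Knl ε p w Ω u x * v x := by
      intro x
      rw [Knl, ← integral_mul_const]
    simp_rw [hinner]
  have hval : (-∫ x in Ω, Knl ε p w Ω u x * v x) = 1/4 * ∫ z, F' 0 z ∂μ := by
    rw [hstepB, hswap, hD]
    ring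
  rw [hfun, hval]
  exact H2
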